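/- (Positive Definite quNac.) Let ρ ∈ ℕ, let G₀ ∈ ℝ^{n×n} be symmetric positive definite, and for k = 0,…,ρ let Q_{k+1} ∈ ℝ^{n×n} be symmetric and Sₖ ∈ ℝ^{n×q_k} be such that Sₖᵀ·Q_{k+1}·Sₖ is positive definite. Define iteratively G_{k+1} := Q_{k+1}·P(Sₖ,Q_{k+1})·Q_{k+1} + (I − Q_{k+1}·P(Sₖ,Q_{k+1}))·Gₖ·(I − P(Sₖ,Q_{k+1})·Q_{k+1}), where P(Sₖ,Q_{k+1}) := Sₖ(SₖᵀQ_{k+1}Sₖ)⁻¹Sₖᵀ. Then Gₖ is symmetric positive definite for every k = 0,…,ρ+1. -/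

import Mathlib

open Matrix

/-- The projection-type matrix `P(S,Q) := S (Sᵀ Q S)⁻¹ Sᵀ`. -/
noncomputable def projMat {n q : ℕ} (S : Matrix (Fin n) (Fin q) ℝ)
    (Q : Matrix (Fin n) (Fin n) ℝ) : Matrix (Fin n) (Fin n) ℝ :=
  S * (Sᵀ * Q * S)⁻¹ * Sᵀ

lemma quad_form {m k : ℕ} (B : Matrix (Fin m) (Fin k) ℝ) (C : Matrix (Fin m) (Fin m) ℝ)
    (x : Fin k → ℝ) :
    x ⬝ᵥ (Bᵀ * C * B) *ᵥ x = (B *ᵥ x) ⬝ᵥ C *ᵥ (B *ᵥ x) := by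
  rw [Matrix.mul_assoc, ← mulVec_mulVec, dotProduct_mulVec, vecMul_transpose, ← mulVec_mulVec]

lemma quNac_posDef {n q : ℕ} (S : Matrix (Fin n) (Fin q) ℝ)
    (Q G : Matrix (Fin n) (Fin n) ℝ)
    (hQ : Q.IsSymm) (hM : (Sᵀ * Q * S).PosDef) (hG : G.PosDef) :
    (Q * projMat S Q * Q +
      (1 - Q * projMat S Q) * G * (1 - projMat S Q * Q)).PosDef := by
  set M := Sᵀ * Q * S with hMdef
  have hMi : (M⁻¹).PosDef := hM.inv
  have hMiT : (M⁻¹)ᵀ = M⁻¹ := by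
    have := hMi.1
    rwa [IsHermitian, conjTranspose_eq_transpose_of_trivial] at this
  have hQT : Qᵀ = Q := hQ
  set P := projMat S Q with hPdef
  have hPeq : P = S * M⁻¹ * Sᵀ := rfl
  have hPT : Pᵀ = P := by
    rw [hPeq, transpose_mul, transpose_mul, transpose_transpose, hMiT, Matrix.mul_assoc]
  set A := 1 - Q * P with hAdef
  have hAT : Aᵀ = 1 - P * Q := by
    simp [hAdef, transpose_mul, hPT, hQT]
  -- rewrite the two terms in "Bᵀ C B" shape
  have hQPQ : Q * P * Q = (Sᵀ * Q)ᵀ * M⁻¹ * (Sᵀ * Q) := by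
    rw [transpose_mul, hQT, transpose_transpose, hPeq]
    simp only [Matrix.mul_assoc]
  have hAGA : A * G * (1 - P * Q) = (Aᵀ)ᵀ * G * Aᵀ := by
    rw [transpose_transpose, hAT]
  have h1 : (Q * P * Q).PosSemidef := by
    rw [hQPQ, ← conjTranspose_eq_transpose_of_trivial]
    exact hMi.posSemidef.conjTranspose_mul_mul_same _
  have h2 : (A * G * (1 - P * Q)).PosSemidef := by
    rw [hAGA, ← conjTranspose_eq_transpose_of_trivial (Aᵀ)]
    exact hG.posSemidef.conjTranspose_mul_mul_same _
  refine posDef_iff_dotProduct_mulVec.mpr ⟨h1.1.add h2.1, fun x hx => ?_⟩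
  rw [add_mulVec, dotProduct_add, star_trivial]
  set z := Aᵀ *ᵥ x with hz
  have hq2 : x ⬝ᵥ (A * G * (1 - P * Q)) *ᵥ x = z ⬝ᵥ G *ᵥ z := by
    rw [hAGA, quad_form]
  set y := (Sᵀ * Q) *ᵥ x with hy
  have hq1 : x ⬝ᵥ (Q * P * Q) *ᵥ x = y ⬝ᵥ M⁻¹ *ᵥ y := by
    rw [hQPQ, quad_form]
  rw [hq1, hq2]
  by_cases hzz : z = 0
  · -- then x = (P*Q) *ᵥ x, so y ≠ 0 and the first term is positive
    have hx_eq : x = (P * Q) *ᵥ x := by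
      have h0 : x - (P * Q) *ᵥ x = 0 := by
        have := hzz
        rwa [hz, hAT, sub_mulVec, one_mulVec] at this
      exact (sub_eq_zero.mp h0)
    have hyne : y ≠ 0 := by
      intro hy0
      apply hx
      have : (P * Q) *ᵥ x = S *ᵥ (M⁻¹ *ᵥ y) := by
        rw [hy, mulVec_mulVec, mulVec_mulVec, hPeq]
        simp only [Matrix.mul_assoc]
      rw [hx_eq, this, hy0]
      simp
    have h1pos : 0 < y ⬝ᵥ M⁻¹ *ᵥ y := by
      have := hMi.dotProduct_mulVec_pos hyne
      rwa [star_trivial] at this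
    have h2nn : 0 ≤ z ⬝ᵥ G *ᵥ z := by
      have := hG.posSemidef.dotProduct_mulVec_nonneg z
      rwa [star_trivial] at this
    linarith
  · have h2pos : 0 < z ⬝ᵥ G *ᵥ z := by
      have := hG.dotProduct_mulVec_pos hzz
      rwa [star_trivial] at this
    have h1nn : 0 ≤ y ⬝ᵥ M⁻¹ *ᵥ y := by
      have := hMi.posSemidef.dotProduct_mulVec_nonneg y
      rwa [star_trivial] at this
    linarith

theorem stmt8 {n : ℕ} (ρ : ℕ)
    (q : ℕ → ℕ)
    (Q : ℕ → Matrix (Fin n) (Fin n) ℝ)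
    (S : (k : ℕ) → Matrix (Fin n) (Fin (q k)) ℝ)
    (hQ : ∀ k ≤ ρ, (Q (k + 1)).IsSymm)
    (hSQS : ∀ k ≤ ρ, ((S k)ᵀ * Q (k + 1) * S k).PosDef)
    (G : ℕ → Matrix (Fin n) (Fin n) ℝ)
    (hG₀ : (G 0).PosDef)
    (hrec : ∀ k ≤ ρ, G (k + 1) =
      Q (k + 1) * projMat (S k) (Q (k + 1)) * Q (k + 1) +
        (1 - Q (k + 1) * projMat (S k) (Q (k + 1))) * G k *
          (1 - projMat (S k) (Q (k + 1)) * Q (k + 1))) :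
    ∀ k ≤ ρ + 1, (G k).PosDef := by
  intro k
  induction k with
  | zero => intro _; exact hG₀
  | succ k ih =>
    intro hk
    have hk' : k ≤ ρ := Nat.lt_succ_iff.mp hk
    rw [hrec k hk']
    exact quNac_posDef _ _ _ (hQ k hk') (hSQS k hk') (ih (le_trans hk' (Nat.le_succ ρ)))
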